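/- No Catalan number is congruent to 3 modulo 4: for all n ≥ 0, C(n) ≢ 3 (mod 4). -/

import Mathlib

open Finset

lemma catalan_succ_range (n : ℕ) :
    catalan (n + 1) = ∑ i ∈ range (n + 1), catalan i * catalan (n - i) := by
  rw [catalan_succ]
  exact Fin.sum_univ_eq_sum_range (fun i => catalan i * catalan (n - i)) (n + 1)

lemma split_odd (m : ℕ) (f : ℕ → ℕ) (hf : ∀ i ≤ 2 * m + 1, f i = f (2 * m + 1 - i)) :
    ∑ i ∈ range (2 * m + 2), f i = 2 * ∑ i ∈ range (m + 1), f i := by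
  have h1 : ∑ i ∈ range (2 * m + 2), f i
      = ∑ i ∈ Ico 0 (m + 1), f i + ∑ i ∈ Ico (m + 1) (2 * m + 2), f i := by
    rw [range_eq_Ico,
      ← Finset.sum_Ico_consecutive f (show 0 ≤ m + 1 by omega) (show m + 1 ≤ 2 * m + 2 by omega)]
  have h2 : ∑ j ∈ Ico 0 (m + 1), f (2 * m + 1 - j)
      = ∑ j ∈ Ico (m + 1) (2 * m + 2), f j := by
    have h := Finset.sum_Ico_reflect f 0 (n := 2 * m + 1) (m := m + 1) (by omega)
    rw [show 2 * m + 1 + 1 - (m + 1) = m + 1 from by omega,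
      show 2 * m + 1 + 1 - 0 = 2 * m + 2 from by omega] at h
    exact h
  have h3 : ∑ j ∈ Ico 0 (m + 1), f (2 * m + 1 - j) = ∑ j ∈ Ico 0 (m + 1), f j :=
    Finset.sum_congr rfl fun i hi => (hf i (by simp only [mem_Ico] at hi; omega)).symm
  rw [h1, ← h2, h3, range_eq_Ico, two_mul]

lemma split_even (m : ℕ) (f : ℕ → ℕ) (hf : ∀ i ≤ 2 * m, f i = f (2 * m - i)) :
    ∑ i ∈ range (2 * m + 1), f i = 2 * ∑ i ∈ range m, f i + f m := by
  have h1 : ∑ i ∈ range (2 * m + 1), f i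
      = ∑ i ∈ Ico 0 m, f i + (f m + ∑ i ∈ Ico (m + 1) (2 * m + 1), f i) := by
    rw [range_eq_Ico, ← Finset.sum_Ico_consecutive f (Nat.zero_le m) (show m ≤ 2 * m + 1 by omega),
      ← Finset.sum_eq_sum_Ico_succ_bot (show m < 2 * m + 1 by omega)]
  have h2 : ∑ j ∈ Ico 0 m, f (2 * m - j) = ∑ j ∈ Ico (m + 1) (2 * m + 1), f j := by
    have h := Finset.sum_Ico_reflect f 0 (n := 2 * m) (m := m) (by omega)
    rw [show 2 * m + 1 - m = m + 1 from by omega,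
      show 2 * m + 1 - 0 = 2 * m + 1 from by omega] at h
    exact h
  have h3 : ∑ j ∈ Ico 0 m, f (2 * m - j) = ∑ j ∈ Ico 0 m, f j :=
    Finset.sum_congr rfl fun i hi => (hf i (by simp only [mem_Ico] at hi; omega)).symm
  rw [h1, ← h2, h3, range_eq_Ico]
  ring

lemma pow2_add_pow2_ne_aux (a b c : ℕ) (hab : a < b) : 2 ^ a + 2 ^ b ≠ 2 ^ c := by
  intro h
  have h1 : (2:ℕ) ^ b < 2 ^ c := by
    have : 0 < 2 ^ a := Nat.pow_pos (show 0 < 2 by norm_num)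
    omega
  have h2 : (2:ℕ) ^ c < 2 ^ (b + 1) := by
    have h3 : (2:ℕ) ^ a < 2 ^ b := Nat.pow_lt_pow_right one_lt_two hab
    have : (2:ℕ) ^ (b + 1) = 2 * 2 ^ b := by ring
    omega
  have hbc : b < c := (Nat.pow_lt_pow_iff_right one_lt_two).mp h1
  have hcb : c < b + 1 := (Nat.pow_lt_pow_iff_right one_lt_two).mp h2
  omega

lemma pow2_add_pow2_ne (a b c : ℕ) (hab : a ≠ b) : 2 ^ a + 2 ^ b ≠ 2 ^ c := by
  rcases lt_or_gt_of_ne hab with h | h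
  · exact pow2_add_pow2_ne_aux a b c h
  · rw [add_comm]; exact pow2_add_pow2_ne_aux b a c h

lemma catalan_facts : ∀ n : ℕ,
    (Odd (catalan n) ↔ ∃ k, n + 1 = 2 ^ k) ∧ catalan n % 4 ≠ 3 := by
  intro n
  induction n using Nat.strong_induction_on with
  | _ n ih =>
    match n with
    | 0 =>
      refine ⟨?_, by simp [catalan_zero]⟩
      simp only [catalan_zero]
      exact ⟨fun _ => ⟨0, rfl⟩, fun _ => odd_one⟩
    | (N + 1) =>
      have hsym : ∀ i ≤ N, catalan i * catalan (N - i)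
          = catalan (N - i) * catalan (N - (N - i)) := by
        intro i hi
        rw [Nat.sub_sub_self hi, mul_comm]
      rcases Nat.even_or_odd N with he | ho
      · -- N = 2m even
        rw [Nat.even_iff] at he
        obtain ⟨m, rfl⟩ : ∃ m, N = 2 * m := ⟨N / 2, by omega⟩
        have key : catalan (2 * m + 1)
            = 2 * ∑ i ∈ range m, catalan i * catalan (2 * m - i)
              + catalan m * catalan m := by
          rw [catalan_succ_range]
          have h := split_even m (fun i => catalan i * catalan (2 * m - i))
            (fun i hi => by simpa using hsym i hi)
          rw [show 2 * m - m = m from by omega] at h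
          exact h
        set S := ∑ i ∈ range m, catalan i * catalan (2 * m - i) with hS
        have ihm := ih m (by omega)
        have hiff : (∃ k, m + 1 = 2 ^ k) ↔ (∃ k, 2 * m + 1 + 1 = 2 ^ k) := by
          constructor
          · rintro ⟨k, hk⟩
            exact ⟨k + 1, by rw [pow_succ]; omega⟩
          · rintro ⟨k, hk⟩
            match k with
            | 0 => rw [pow_zero] at hk; omega
            | j + 1 =>
              refine ⟨j, ?_⟩
              rw [pow_succ] at hk
              omega
        have hsq : (catalan m * catalan m) % 2 = catalan m % 2 := by
          rw [Nat.mul_mod]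
          rcases Nat.even_or_odd (catalan m) with h | h
          · rw [Nat.even_iff] at h; rw [h]
          · rw [Nat.odd_iff] at h; rw [h]
        constructor
        · rw [key, ← hiff, ← ihm.1, Nat.odd_iff, Nat.odd_iff, Nat.add_mod,
            Nat.mul_mod_right, hsq]
          omega
        · rw [key]
          rcases Nat.even_or_odd (catalan m) with hev | hodd
          · obtain ⟨t, ht⟩ := hev
            have h4 : catalan m * catalan m = 4 * (t * t) := by rw [ht]; ring
            rw [h4]
            omega
          · obtain ⟨k, hk⟩ := ihm.1.mp hodd
            have hSeven : 2 ∣ S := by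
              rw [hS]
              apply Finset.dvd_sum
              intro i hi
              simp only [mem_range] at hi
              by_contra hnd
              have hpo : Odd (catalan i * catalan (2 * m - i)) := by
                rcases Nat.even_or_odd (catalan i * catalan (2 * m - i)) with h | h
                · exact absurd h.two_dvd hnd
                · exact h
              obtain ⟨hoi, hoj⟩ := Nat.odd_mul.mp hpo
              obtain ⟨a, ha⟩ := (ih i (by omega)).1.mp hoi
              obtain ⟨b, hb⟩ := (ih (2 * m - i) (by omega)).1.mp hoj
              have hab : a ≠ b := by
                intro h
                rw [h] at ha
                omega
              exact pow2_add_pow2_ne a b (k + 1) hab (by rw [pow_succ]; omega)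
            obtain ⟨s, hs⟩ := hSeven
            obtain ⟨t, ht⟩ := hodd
            have h4 : catalan m * catalan m = 4 * (t * t + t) + 1 := by rw [ht]; ring
            rw [h4, hs]
            omega
      · -- N = 2m+1 odd
        rw [Nat.odd_iff] at ho
        obtain ⟨m, rfl⟩ : ∃ m, N = 2 * m + 1 := ⟨N / 2, by omega⟩
        have key : catalan (2 * m + 1 + 1)
            = 2 * ∑ i ∈ range (m + 1), catalan i * catalan (2 * m + 1 - i) := by
          rw [catalan_succ_range, show 2 * m + 1 + 1 = 2 * m + 2 from by ring]
          exact split_odd m (fun i => catalan i * catalan (2 * m + 1 - i))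
            (fun i hi => by simpa using hsym i hi)
        constructor
        · rw [key]
          constructor
          · intro h
            rw [Nat.odd_iff, Nat.mul_mod_right] at h
            omega
          · rintro ⟨k, hk⟩
            exfalso
            match k with
            | 0 => rw [pow_zero] at hk; omega
            | j + 1 =>
              rw [pow_succ] at hk
              have : (2:ℕ) ^ j ≥ 1 := Nat.one_le_two_pow
              omega
        · rw [key]
          omega

/-- No Catalan number is congruent to `3` modulo `4`. -/
theorem catalan_not_three_mod_four (n : ℕ) : ¬ (catalan n ≡ 3 [MOD 4]) := by
  intro h
  exact (catalan_facts n).2 (by simpa [Nat.ModEq] using h)
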